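/- arXiv:1103.3343 — 2 statements merged into one kernel-verified Lean document; each statement's English description precedes it below -/
import Mathlib

section
/- Let γ be a generic closed regular curve in ℝ². Then μ(γ) > 0 holds if and only if the set 𝒢(γ) of admissible polygons contains both a positive polygon and a negative polygon. -/
open Set

noncomputable section

/-- The 2×2 determinant of two plane vectors. -/
def det2 (v w : ℝ × ℝ) : ℝ := v.1 * w.2 - v.2 * w.1

/-- Rotation of a plane vector by +π/2 (the leftward normal direction). -/
def leftNormal (v : ℝ × ℝ) : ℝ × ℝ := (-v.2, v.1)

/-- A closed regular planar curve: a smooth 1-periodic map `ℝ → ℝ²`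
with nowhere vanishing derivative. -/
structure PlanarCurve where
  toFun : ℝ → ℝ × ℝ
  smooth : ContDiff ℝ (⊤ : ℕ∞) toFun
  periodic : Function.Periodic toFun 1
  regular : ∀ t : ℝ, deriv toFun t ≠ 0

/-- `det(γ̇(t), γ̈(t))`; its zeros are the inflection points of `γ`. -/
def curvDet (γ : PlanarCurve) (t : ℝ) : ℝ :=
  det2 (deriv γ.toFun t) (deriv (deriv γ.toFun) t)

/-- The signed curvature `κ_γ(t) = det(γ̇(t), γ̈(t))/|γ̇(t)|³`. -/
def curvature (γ : PlanarCurve) (t : ℝ) : ℝ :=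
  curvDet γ t / ‖deriv γ.toFun t‖ ^ 3

/-- `t` is a parameter mapping to a self-intersection point of `γ`. -/
def IsCrossingParam (γ : PlanarCurve) (t : ℝ) : Prop :=
  ∃ s : ℝ, γ.toFun s = γ.toFun t ∧ ∀ k : ℤ, s ≠ t + k

/-- The set of self-intersection (crossing) points of `γ` in the plane. -/
def crossingSet (γ : PlanarCurve) : Set (ℝ × ℝ) :=
  {p | ∃ t : ℝ, γ.toFun t = p ∧ IsCrossingParam γ t}

/-- `#_γ`, the number of crossings of `γ`. -/
def crossingCount (γ : PlanarCurve) : ℕ := (crossingSet γ).ncard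

/-- The inflection parameters of `γ` in one period. -/
def inflectionSet (γ : PlanarCurve) : Set ℝ :=
  {t ∈ Ico (0 : ℝ) 1 | curvDet γ t = 0}

/-- `i_γ`, the number of inflection points of `γ` in one period. -/
def inflectionCount (γ : PlanarCurve) : ℕ := (inflectionSet γ).ncard

/-- Genericity: the self-intersections form a finite set of transversal double
points, and all the zeros of the curvature are nondegenerate. -/
def IsGeneric (γ : PlanarCurve) : Prop :=
  (crossingSet γ).Finite ∧
  (∀ t s : ℝ, γ.toFun s = γ.toFun t → (∀ k : ℤ, s ≠ t + k) →
      det2 (deriv γ.toFun t) (deriv γ.toFun s) ≠ 0 ∧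
      ∀ u : ℝ, γ.toFun u = γ.toFun t →
        (∃ k : ℤ, u = t + k) ∨ (∃ k : ℤ, u = s + k)) ∧
  (∀ t : ℝ, curvDet γ t = 0 → deriv (curvDet γ) t ≠ 0)

/-- The Jacobian determinant of a map `φ : ℝ² → ℝ²`. -/
def jacDet (φ : ℝ × ℝ → ℝ × ℝ) (p : ℝ × ℝ) : ℝ :=
  det2 (fderiv ℝ φ p (1, 0)) (fderiv ℝ φ p (0, 1))

/-- Two curves are geotopic (have the same topological type) if an
orientation-preserving diffeomorphism of the plane maps the image of one
onto the image of the other. -/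
def Geotopic (γ₁ γ₂ : PlanarCurve) : Prop :=
  ∃ φ ψ : ℝ × ℝ → ℝ × ℝ,
    ContDiff ℝ (⊤ : ℕ∞) φ ∧ ContDiff ℝ (⊤ : ℕ∞) ψ ∧
    (∀ p, ψ (φ p) = p) ∧ (∀ p, φ (ψ p) = p) ∧
    (∀ p, 0 < jacDet φ p) ∧
    φ '' (Set.range γ₁.toFun) = Set.range γ₂.toFun

/-- `I(γ)`: the minimal number of inflection points among generic curves
geotopic to `γ`. -/
def I (γ : PlanarCurve) : ℕ :=
  sInf {k : ℕ | ∃ σ : PlanarCurve, IsGeneric σ ∧ Geotopic γ σ ∧ inflectionCount σ = k}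

/-- `γ` has rotation index `m`: the continuous angle function of the unit
tangent vector increases by `2πm` over one period. -/
def HasRotationIndex (γ : PlanarCurve) (m : ℤ) : Prop :=
  ∃ θ : ℝ → ℝ, Continuous θ ∧
    (∀ t : ℝ, deriv γ.toFun t = ‖deriv γ.toFun t‖ • (Real.cos (θ t), Real.sin (θ t))) ∧
    θ 1 = θ 0 + 2 * Real.pi * m

/-- An (admissible-to-be) `n`-gon of `γ`: a disjoint union of `n` proper
closed arcs of `S¹ = ℝ/ℤ` with endpoints at crossing parameters, whose image
is a (piecewise smooth) simple closed curve, together with its interior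
domain `D` and the orientation data putting `D` on the left. -/
structure CurvePolygon (γ : PlanarCurve) where
  /-- the number of arcs -/
  n : ℕ
  npos : 0 < n
  /-- left endpoints of the arcs -/
  a : Fin n → ℝ
  /-- right endpoints of the arcs -/
  b : Fin n → ℝ
  lt : ∀ i, a i < b i
  /-- the arcs are pairwise disjoint and cyclically ordered within one period -/
  ordered : ∀ i : Fin n,
    (∀ h : (i : ℕ) + 1 < n, b i < a ⟨(i : ℕ) + 1, h⟩) ∧
    ((i : ℕ) + 1 = n → b i < a ⟨0, npos⟩ + 1)
  crossing_a : ∀ i, IsCrossingParam γ (a i)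
  crossing_b : ∀ i, IsCrossingParam γ (b i)
  /-- the image `γ(J)` is a simple closed curve -/
  jordan : Nonempty ((γ.toFun '' (⋃ i, Icc (a i) (b i))) ≃ₜ Circle)
  /-- the interior domain -/
  D : Set (ℝ × ℝ)
  D_open : IsOpen D
  D_bounded : Bornology.IsBounded D
  D_conn : IsConnected D
  D_simplyConnected : SimplyConnectedSpace ↥D
  D_frontier : frontier D = γ.toFun '' (⋃ i, Icc (a i) (b i))
  /-- the sign `ε_J` on each arc -/
  eps : Fin n → ℤ
  eps_pm : ∀ i, eps i = 1 ∨ eps i = -1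
  /-- traversing arc `i` in the direction given by `eps i`, the interior
  domain `D` lies on the left -/
  eps_left : ∀ i, ∀ t ∈ Ioo (a i) (b i), ∃ δ > 0, ∀ s ∈ Ioo (0 : ℝ) δ,
      γ.toFun t + s • leftNormal ((eps i : ℝ) • deriv γ.toFun t) ∈ D
  /-- the combinatorial successor: arc `next i` starts at the vertex where
  arc `i` ends -/
  next : Equiv.Perm (Fin n)
  next_match : ∀ i, γ.toFun (if eps i = 1 then b i else a i)
      = γ.toFun (if eps (next i) = 1 then a (next i) else b (next i))

namespace CurvePolygon

variable {γ : PlanarCurve}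

/-- The incoming unit-scale tangent direction at the end vertex of arc `i`. -/
def incoming (J : CurvePolygon γ) (i : Fin J.n) : ℝ × ℝ :=
  (J.eps i : ℝ) • deriv γ.toFun (if J.eps i = 1 then J.b i else J.a i)

/-- The outgoing tangent direction at the start vertex of arc `i`. -/
def outgoing (J : CurvePolygon γ) (i : Fin J.n) : ℝ × ℝ :=
  (J.eps i : ℝ) • deriv γ.toFun (if J.eps i = 1 then J.a i else J.b i)

/-- The interior angle at the vertex following arc `i` is less than `π`
(all vertices are transversal crossings, so angles are never `0` or `π`). -/
def AngleLtPi (J : CurvePolygon γ) (i : Fin J.n) : Prop :=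
  0 < det2 (J.incoming i) (J.outgoing (J.next i))

/-- Admissibility: at most two of the interior angles are less than `π`. -/
def Admissible (J : CurvePolygon γ) : Prop :=
  {i : Fin J.n | J.AngleLtPi i}.ncard ≤ 2

/-- A positive polygon: every arc is traversed in the direction of `γ`. -/
def Positive (J : CurvePolygon γ) : Prop := ∀ i, J.eps i = 1

/-- A negative polygon: every arc is traversed against the direction of `γ`. -/
def Negative (J : CurvePolygon γ) : Prop := ∀ i, J.eps i = -1

end CurvePolygon

/-- A shell (1-gon) of `γ` with arc `[x, y]` and sign `sgn`. -/
def IsShell (γ : PlanarCurve) (x y : ℝ) (sgn : ℤ) : Prop :=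
  ∃ J : CurvePolygon γ, J.n = 1 ∧ ∀ i : Fin J.n, J.a i = x ∧ J.b i = y ∧ J.eps i = sgn

/-- An admissible function for `γ`: a `{0, ±1}`-valued 1-periodic function on
`S¹_γ` (vanishing at the crossing parameters) with finite support, such that
every admissible polygon `J` contains a support point `t` with `Φ t = ε_J t`. -/
def IsAdmissibleFun (γ : PlanarCurve) (Φ : ℝ → ℤ) : Prop :=
  Function.Periodic Φ 1 ∧
  (∀ t, Φ t = 0 ∨ Φ t = 1 ∨ Φ t = -1) ∧
  (∀ t, IsCrossingParam γ t → Φ t = 0) ∧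
  {t ∈ Ico (0 : ℝ) 1 | Φ t ≠ 0}.Finite ∧
  ∀ J : CurvePolygon γ, J.Admissible →
    ∃ i : Fin J.n, ∃ t ∈ Ioo (J.a i) (J.b i), Φ t = J.eps i

/-- The support of `Φ` within one period. -/
def suppIn (Φ : ℝ → ℤ) : Set ℝ := {t ∈ Ico (0 : ℝ) 1 | Φ t ≠ 0}

/-- The cyclic successor of `x` in a (finite) set `S ⊆ [0,1)`. -/
def nextPt (S : Set ℝ) (x : ℝ) : ℝ := by
  classical exact if (∃ y ∈ S, x < y) then sInf {y ∈ S | x < y} else sInf S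

/-- `μ(Φ)`: the number of cyclic sign changes of the nonzero values of `Φ`. -/
def muFun (Φ : ℝ → ℤ) : ℕ :=
  {t ∈ suppIn Φ | Φ t ≠ Φ (nextPt (suppIn Φ) t)}.ncard

/-- The invariant `μ(γ)`: the minimum of `μ(Φ)` over admissible functions. -/
def mu (γ : PlanarCurve) : ℕ :=
  sInf {k : ℕ | ∃ Φ : ℝ → ℤ, IsAdmissibleFun γ Φ ∧ muFun Φ = k}

/-! ### Double tangents -/

/-- The line through `p` with direction `v`. -/
def lineThrough (p v : ℝ × ℝ) : Set (ℝ × ℝ) := {q | det2 v (q - p) = 0}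

/-- The points of the line through `p` with direction `v` at which the line is
tangent to `γ`. -/
def tangentPts (γ : PlanarCurve) (p v : ℝ × ℝ) : Set (ℝ × ℝ) :=
  {q | det2 v (q - p) = 0 ∧ ∃ t : ℝ, γ.toFun t = q ∧ det2 v (deriv γ.toFun t) = 0}

/-- `L` is a double tangent of `γ`: a line tangent to `γ` at exactly two
points of its image. -/
def IsDoubleTangent (γ : PlanarCurve) (L : Set (ℝ × ℝ)) : Prop :=
  ∃ p v : ℝ × ℝ, v ≠ 0 ∧ L = lineThrough p v ∧ (tangentPts γ p v).ncard = 2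

/-- Near the parameter `t`, the curve lies (weakly) on the `σ`-side of the
line through `p` with direction `v`. -/
def LocallyOnSide (γ : PlanarCurve) (p v : ℝ × ℝ) (t : ℝ) (σ : ℝ) : Prop :=
  ∃ δ > 0, ∀ s : ℝ, |s - t| < δ → 0 ≤ σ * det2 v (γ.toFun s - p)

/-- A same-side double tangent: near both tangency points the curve lies on
the same side of the line. -/
def IsSameSideDT (γ : PlanarCurve) (L : Set (ℝ × ℝ)) : Prop :=
  ∃ p v : ℝ × ℝ, v ≠ 0 ∧ L = lineThrough p v ∧ (tangentPts γ p v).ncard = 2 ∧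
    ∃ σ : ℝ, (σ = 1 ∨ σ = -1) ∧
      ∀ t : ℝ, γ.toFun t ∈ tangentPts γ p v → det2 v (deriv γ.toFun t) = 0 →
        LocallyOnSide γ p v t σ

/-- An opposite-side double tangent: near the two tangency points the curve
lies on opposite sides of the line. -/
def IsOppSideDT (γ : PlanarCurve) (L : Set (ℝ × ℝ)) : Prop :=
  ∃ p v : ℝ × ℝ, v ≠ 0 ∧ L = lineThrough p v ∧ (tangentPts γ p v).ncard = 2 ∧
    ∃ t₁ t₂ : ℝ, γ.toFun t₁ ≠ γ.toFun t₂ ∧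
      γ.toFun t₁ ∈ tangentPts γ p v ∧ γ.toFun t₂ ∈ tangentPts γ p v ∧
      det2 v (deriv γ.toFun t₁) = 0 ∧ det2 v (deriv γ.toFun t₂) = 0 ∧
      LocallyOnSide γ p v t₁ 1 ∧ LocallyOnSide γ p v t₂ (-1)

/-- `d₁(γ)`: the number of same-side double tangents. -/
def d1 (γ : PlanarCurve) : ℕ := {L : Set (ℝ × ℝ) | IsSameSideDT γ L}.ncard

/-- `d₂(γ)`: the number of opposite-side double tangents. -/
def d2 (γ : PlanarCurve) : ℕ := {L : Set (ℝ × ℝ) | IsOppSideDT γ L}.ncard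

/-- `d(γ) = d₁(γ) + d₂(γ)`: the number of double tangents. -/
def dTot (γ : PlanarCurve) : ℕ := d1 γ + d2 γ

/-- Genericity of the tangent lines: finitely many double tangents, no line
tangent at three or more points, and no double tangent touching `γ` at an
inflection point. -/
def HasGenericTangents (γ : PlanarCurve) : Prop :=
  {L : Set (ℝ × ℝ) | IsDoubleTangent γ L}.Finite ∧
  (∀ p v : ℝ × ℝ, v ≠ 0 → 2 ≤ (tangentPts γ p v).ncard → (tangentPts γ p v).ncard = 2) ∧
  (∀ p v : ℝ × ℝ, v ≠ 0 → 2 ≤ (tangentPts γ p v).ncard →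
    ∀ t : ℝ, det2 v (γ.toFun t - p) = 0 → det2 v (deriv γ.toFun t) = 0 →
      curvDet γ t ≠ 0)

/-- `δ(γ)`: the minimal number of double tangents among generic curves
geotopic to `γ`. -/
def delta (γ : PlanarCurve) : ℕ :=
  sInf {k : ℕ | ∃ σ : PlanarCurve, IsGeneric σ ∧ HasGenericTangents σ ∧
    Geotopic γ σ ∧ dTot σ = k}

/-- `I(γ)` where the minimum is taken over curves generic also with respect to
double tangents. -/
def Idt (γ : PlanarCurve) : ℕ :=
  sInf {k : ℕ | ∃ σ : PlanarCurve, IsGeneric σ ∧ HasGenericTangents σ ∧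
    Geotopic γ σ ∧ inflectionCount σ = k}

/-! ### Auxiliary machinery for Statement 7 -/

namespace Stmt7Aux

variable {γ : PlanarCurve}

lemma per_int (γ : PlanarCurve) (t : ℝ) (k : ℤ) : γ.toFun (t + k) = γ.toFun t := by
  have := γ.periodic.sub_int_mul_eq (x := t) (-k)
  simpa using this

lemma cp_shift (t : ℝ) (k : ℤ) (h : IsCrossingParam γ t) : IsCrossingParam γ (t + k) := by
  obtain ⟨s, hs, hn⟩ := h
  refine ⟨s, by rw [per_int γ t k]; exact hs, fun j hj => hn (k + j) ?_⟩
  push_cast at hj ⊢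
  linarith

lemma cp_add_one {c : ℝ} (hc : IsCrossingParam γ c) : IsCrossingParam γ (c + 1) := by
  simpa using cp_shift c 1 hc

lemma cp_sub_one {c : ℝ} (hc : IsCrossingParam γ c) : IsCrossingParam γ (c - 1) := by
  simpa [sub_eq_add_neg] using cp_shift c (-1) hc

lemma cp_fract {t : ℝ} (h : IsCrossingParam γ t) : IsCrossingParam γ (Int.fract t) := by
  have := cp_shift t (-⌊t⌋) h
  simpa [Int.fract, sub_eq_add_neg] using this

lemma eq_fract_of {u v : ℝ} (huI : u ∈ Ico (0:ℝ) 1) {k : ℤ} (hk : u = v + k) :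
    u = Int.fract v := by
  have h1 : Int.fract u = Int.fract v := Int.fract_eq_fract.mpr ⟨k, by linarith⟩
  rwa [Int.fract_eq_self.mpr ⟨huI.1, huI.2⟩] at h1

/-- The crossing parameters in one period form a finite set. -/
lemma F_fin (hγ : IsGeneric γ) : {t | IsCrossingParam γ t ∧ t ∈ Ico (0:ℝ) 1}.Finite := by
  have key : ∀ p ∈ crossingSet γ, ({u | γ.toFun u = p} ∩ Ico (0:ℝ) 1).Finite := by
    rintro p ⟨t₀, ht₀p, s₀, hs₀, hne⟩
    refine ((Set.finite_singleton (Int.fract s₀)).insert (Int.fract t₀)).subset ?_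
    rintro u ⟨hu, huI⟩
    have h2 := (hγ.2.1 t₀ s₀ hs₀ hne).2 u (by rw [hu, ← ht₀p])
    rcases h2 with ⟨k, hk⟩ | ⟨k, hk⟩
    · exact Or.inl (eq_fract_of huI hk)
    · exact Or.inr (eq_fract_of huI hk)
  refine (hγ.1.biUnion key).subset ?_
  rintro t ⟨ht, htI⟩
  exact Set.mem_biUnion ⟨t, rfl, ht⟩ ⟨rfl, htI⟩

/-- The next crossing parameter after `c`. -/
def nxt (γ : PlanarCurve) (c : ℝ) : ℝ := sInf {t | IsCrossingParam γ t ∧ c < t}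

lemma nxt_le {c t : ℝ} (ht : IsCrossingParam γ t) (hct : c < t) : nxt γ c ≤ t :=
  csInf_le ⟨c, fun _ hy => le_of_lt hy.2⟩ ⟨ht, hct⟩

lemma nxt_spec (hγ : IsGeneric γ) {c : ℝ} (hc : IsCrossingParam γ c) :
    IsCrossingParam γ (nxt γ c) ∧ c < nxt γ c ∧ nxt γ c ≤ c + 1 := by
  classical
  set A' : Set ℝ := {t | IsCrossingParam γ t ∧ c < t ∧ t ≤ c + 1} with hA'
  have hc1 : (c : ℝ) + 1 ∈ A' := ⟨cp_add_one hc, by linarith, le_refl _⟩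
  have hA'fin : A'.Finite := by
    have hF := F_fin hγ
    have hsub : A' ⊆ (fun x => x + (⌊c⌋ : ℝ)) '' {t | IsCrossingParam γ t ∧ t ∈ Ico (0:ℝ) 1}
        ∪ (fun x => x + ((⌊c⌋ : ℝ) + 1)) '' {t | IsCrossingParam γ t ∧ t ∈ Ico (0:ℝ) 1} := by
      rintro t ⟨ht, h1, h2⟩
      have hfr : IsCrossingParam γ (Int.fract t) := cp_fract ht
      have hIco : Int.fract t ∈ Ico (0:ℝ) 1 := ⟨Int.fract_nonneg t, Int.fract_lt_one t⟩
      have hfl : ⌊t⌋ = ⌊c⌋ ∨ ⌊t⌋ = ⌊c⌋ + 1 := by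
        have l1 : ⌊c⌋ ≤ ⌊t⌋ := Int.floor_le_floor (le_of_lt h1)
        have l2 : ⌊t⌋ ≤ ⌊c⌋ + 1 := by
          have h3 := Int.floor_le_floor h2
          rwa [Int.floor_add_one] at h3
        omega
      have ht' : Int.fract t = t - (⌊t⌋ : ℝ) := rfl
      rcases hfl with h | h
      · left
        refine ⟨Int.fract t, ⟨hfr, hIco⟩, ?_⟩
        simp only [ht', h]
        ring
      · right
        refine ⟨Int.fract t, ⟨hfr, hIco⟩, ?_⟩
        simp only [ht', h]
        push_cast
        ring
    exact ((hF.image _).union (hF.image _)).subset hsub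
  obtain ⟨m, hmA', hmin⟩ := Set.exists_min_image A' id hA'fin ⟨_, hc1⟩
  have hsinf : nxt γ c = m := by
    apply le_antisymm
    · exact nxt_le hmA'.1 hmA'.2.1
    · refine le_csInf ⟨c + 1, hc1.1, by linarith⟩ ?_
      rintro b ⟨hb, hcb⟩
      rcases le_or_gt b (c + 1) with h | h
      · exact hmin b ⟨hb, hcb, h⟩
      · exact le_trans hmA'.2.2 (le_of_lt h)
  rw [hsinf]
  exact ⟨hmA'.1, hmA'.2.1, hmA'.2.2⟩

lemma nxt_add_one (hγ : IsGeneric γ) {c : ℝ} (hc : IsCrossingParam γ c) :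
    nxt γ (c + 1) = nxt γ c + 1 := by
  obtain ⟨hcp, hlt, _⟩ := nxt_spec hγ hc
  obtain ⟨hcp1, hlt1, _⟩ := nxt_spec hγ (cp_add_one hc)
  apply le_antisymm
  · exact nxt_le (cp_add_one hcp) (by linarith)
  · have h1 : IsCrossingParam γ (nxt γ (c + 1) - 1) := cp_sub_one hcp1
    have h2 : nxt γ c ≤ nxt γ (c + 1) - 1 := nxt_le h1 (by linarith)
    linarith

lemma not_cp_mid (_hγ : IsGeneric γ) {c t : ℝ} (_hc : IsCrossingParam γ c)
    (h1 : c < t) (h2 : t < nxt γ c) : ¬ IsCrossingParam γ t :=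
  fun ht => absurd (nxt_le ht h1) (not_le.mpr h2)

lemma interval_disj (_hγ : IsGeneric γ) {c c' t : ℝ} (hc : IsCrossingParam γ c)
    (hc' : IsCrossingParam γ c') (h1 : c < t) (h1' : t < nxt γ c)
    (h2 : c' < t) (h2' : t < nxt γ c') : c = c' := by
  rcases lt_trichotomy c c' with h | h | h
  · have := nxt_le hc' h; linarith
  · exact h
  · have := nxt_le hc h; linarith

/-- A marked point in the gap after a crossing parameter `c`. -/
def pt (γ : PlanarCurve) (p q c : ℝ) : ℝ := p * c + q * nxt γ c

lemma pt_shift (hγ : IsGeneric γ) {c : ℝ} (hc : IsCrossingParam γ c) {p q : ℝ}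
    (hpq : p + q = 1) : pt γ p q (c + 1) = pt γ p q c + 1 := by
  unfold pt
  rw [nxt_add_one hγ hc]
  nlinarith [hpq]

lemma pt_mem (hγ : IsGeneric γ) {c : ℝ} (hc : IsCrossingParam γ c) {p q : ℝ}
    (hp : 0 < p) (hq : 0 < q) (hpq : p + q = 1) :
    c < pt γ p q c ∧ pt γ p q c < nxt γ c := by
  have h := (nxt_spec hγ hc).2.1
  have hp1 : p = 1 - q := by linarith
  subst hp1
  unfold pt
  constructor
  · nlinarith [mul_pos hq (sub_pos.mpr h)]
  · nlinarith [mul_pos (show (0:ℝ) < 1 - q by linarith) (sub_pos.mpr h)]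

lemma cond_shift (hγ : IsGeneric γ) {p q : ℝ} (hpq : p + q = 1) (t : ℝ) :
    (∃ c, IsCrossingParam γ c ∧ t + 1 = pt γ p q c) ↔
      (∃ c, IsCrossingParam γ c ∧ t = pt γ p q c) := by
  constructor
  · rintro ⟨c, hc, he⟩
    have hc' : IsCrossingParam γ (c - 1) := cp_sub_one hc
    refine ⟨c - 1, hc', ?_⟩
    have h1 := pt_shift hγ hc' hpq
    rw [sub_add_cancel] at h1
    linarith
  · rintro ⟨c, hc, he⟩
    exact ⟨c + 1, cp_add_one hc, by rw [pt_shift hγ hc hpq]; linarith⟩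

lemma G_fin (hγ : IsGeneric γ) :
    {c | IsCrossingParam γ c ∧ c ∈ Ioo (-1:ℝ) 1}.Finite := by
  have hF := F_fin hγ
  have hsub : {c | IsCrossingParam γ c ∧ c ∈ Ioo (-1:ℝ) 1} ⊆
      {t | IsCrossingParam γ t ∧ t ∈ Ico (0:ℝ) 1} ∪
        (fun x => x - 1) '' {t | IsCrossingParam γ t ∧ t ∈ Ico (0:ℝ) 1} := by
    rintro c ⟨hc, h1, h2⟩
    rcases le_or_gt 0 c with h | h
    · exact Or.inl ⟨hc, h, h2⟩
    · exact Or.inr ⟨c + 1, ⟨cp_add_one hc, by linarith, by linarith⟩, by ring⟩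
  exact (hF.union (hF.image _)).subset hsub

lemma cond_fin (hγ : IsGeneric γ) {p q : ℝ} (hp : 0 < p) (hq : 0 < q) (hpq : p + q = 1) :
    {t | (∃ c, IsCrossingParam γ c ∧ t = pt γ p q c) ∧ t ∈ Ico (0:ℝ) 1}.Finite := by
  have hsub : {t | (∃ c, IsCrossingParam γ c ∧ t = pt γ p q c) ∧ t ∈ Ico (0:ℝ) 1} ⊆
      pt γ p q '' {c | IsCrossingParam γ c ∧ c ∈ Ioo (-1:ℝ) 1} := by
    rintro t ⟨⟨c, hc, rfl⟩, h0, h1⟩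
    obtain ⟨hml, hmr⟩ := pt_mem hγ hc hp hq hpq
    have hle := (nxt_spec hγ hc).2.2
    exact ⟨c, ⟨hc, by linarith, by linarith⟩, rfl⟩
  exact ((G_fin hγ).image _).subset hsub

lemma nextPt_mem {S : Set ℝ} (hS : S.Finite) (hne : S.Nonempty) (x : ℝ) :
    nextPt S x ∈ S := by
  unfold nextPt
  split_ifs with h
  · obtain ⟨y, hy, hxy⟩ := h
    have := Set.Nonempty.csInf_mem (s := {y ∈ S | x < y}) ⟨y, hy, hxy⟩
      (hS.subset (Set.sep_subset _ _))
    exact this.1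
  · exact Set.Nonempty.csInf_mem hne hS

lemma const_on {S : Set ℝ} (hS : S.Finite) (f : ℝ → ℤ)
    (h : ∀ t ∈ S, f t = f (nextPt S t)) {x y : ℝ} (hx : x ∈ S) (hy : y ∈ S) :
    f x = f y := by
  classical
  suffices key : ∀ n, ∀ z ∈ S, {w ∈ S | z < w}.ncard ≤ n → f z = f (sInf S) by
    rw [key _ x hx le_rfl, key _ y hy le_rfl]
  intro n
  induction n with
  | zero =>
    intro z hz hcard
    have hfin : {w ∈ S | z < w}.Finite := hS.subset (Set.sep_subset _ _)
    have hemp : {w ∈ S | z < w} = ∅ := by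
      rw [← Set.ncard_eq_zero hfin]
      omega
    have hnex : ¬ ∃ w ∈ S, z < w := by
      rintro ⟨w, hw, hzw⟩
      have : w ∈ ({w ∈ S | z < w} : Set ℝ) := ⟨hw, hzw⟩
      rw [hemp] at this
      exact this
    rw [h z hz]
    congr 1
    unfold nextPt
    rw [if_neg hnex]
  | succ n ih =>
    intro z hz hcard
    by_cases hex : ∃ w ∈ S, z < w
    · set T : Set ℝ := {w ∈ S | z < w} with hT
      have hTfin : T.Finite := hS.subset (Set.sep_subset _ _)
      have hTne : T.Nonempty := by
        obtain ⟨w, hw, hzw⟩ := hex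
        exact ⟨w, hw, hzw⟩
      have hmem : sInf T ∈ T := hTne.csInf_mem hTfin
      have hnext : nextPt S z = sInf T := by
        unfold nextPt
        rw [if_pos hex]
      have hsub : {w ∈ S | sInf T < w} ⊆ T \ {sInf T} := by
        rintro w ⟨hwS, hw⟩
        refine ⟨⟨hwS, lt_trans hmem.2 hw⟩, ?_⟩
        intro hww
        simp only [Set.mem_singleton_iff] at hww
        rw [hww] at hw
        exact lt_irrefl _ hw
      have hcard' : {w ∈ S | sInf T < w}.ncard ≤ n := by
        have h1 : {w ∈ S | sInf T < w}.ncard ≤ (T \ {sInf T}).ncard :=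
          Set.ncard_le_ncard hsub hTfin.diff
        have h2 : (T \ {sInf T}).ncard < T.ncard :=
          Set.ncard_diff_singleton_lt_of_mem hmem hTfin
        omega
      rw [h z hz, hnext]
      exact ih (sInf T) hmem.1 hcard'
    · rw [h z hz]
      congr 1
      unfold nextPt
      rw [if_neg hex]

lemma muFun_zero_of_const {Φ : ℝ → ℤ} (σ : ℤ) (hfin : (suppIn Φ).Finite)
    (hval : ∀ t, Φ t ≠ 0 → Φ t = σ) : muFun Φ = 0 := by
  have hemp : {t ∈ suppIn Φ | Φ t ≠ Φ (nextPt (suppIn Φ) t)} = ∅ := by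
    rw [Set.eq_empty_iff_forall_notMem]
    rintro t ⟨hts, hne⟩
    have hts' : t ∈ Ico (0:ℝ) 1 ∧ Φ t ≠ 0 := hts
    have hmem : nextPt (suppIn Φ) t ∈ suppIn Φ := nextPt_mem hfin ⟨t, hts⟩ t
    have hmem' : nextPt (suppIn Φ) t ∈ Ico (0:ℝ) 1 ∧ Φ (nextPt (suppIn Φ) t) ≠ 0 := hmem
    exact hne ((hval t hts'.2).trans (hval _ hmem'.2).symm)
  rw [muFun, hemp, Set.ncard_empty]

end Stmt7Aux
namespace Stmt7Aux

variable {γ : PlanarCurve}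

open Classical in
/-- A `{0, σ}`-valued admissible function supported at midpoints of the gaps. -/
def phiOne (γ : PlanarCurve) (σ : ℤ) : ℝ → ℤ := fun t =>
  if ∃ c, IsCrossingParam γ c ∧ t = pt γ (1/2) (1/2) c then σ else 0

lemma phiOne_adm (hγ : IsGeneric γ) {σ : ℤ} (hσ : σ = 1 ∨ σ = -1)
    (hall : ∀ J : CurvePolygon γ, J.Admissible → ∃ i, J.eps i = σ) :
    IsAdmissibleFun γ (phiOne γ σ) ∧ muFun (phiOne γ σ) = 0 := by
  have hpq : (1:ℝ)/2 + 1/2 = 1 := by norm_num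
  have hval : ∀ t, phiOne γ σ t ≠ 0 → phiOne γ σ t = σ := by
    intro t h
    unfold phiOne at *
    split_ifs at * <;> simp_all
  have hfin : (suppIn (phiOne γ σ)).Finite := by
    refine (cond_fin hγ (by norm_num : (0:ℝ) < 1/2) (by norm_num) hpq).subset ?_
    rintro t ⟨htI, htne⟩
    refine ⟨?_, htI⟩
    by_contra hno
    exact htne (by unfold phiOne; rw [if_neg hno])
  refine ⟨⟨?_, ?_, ?_, hfin, ?_⟩, muFun_zero_of_const σ hfin hval⟩
  · intro t
    have hiff := cond_shift hγ hpq t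
    unfold phiOne
    by_cases h : ∃ c, IsCrossingParam γ c ∧ t = pt γ (1/2) (1/2) c
    · rw [if_pos h, if_pos (hiff.mpr h)]
    · rw [if_neg h, if_neg (fun hx => h (hiff.mp hx))]
  · intro t
    unfold phiOne
    split_ifs <;> tauto
  · intro t ht
    unfold phiOne
    rw [if_neg]
    rintro ⟨c, hc, rfl⟩
    obtain ⟨h1, h2⟩ := pt_mem hγ hc (by norm_num) (by norm_num) hpq
    exact not_cp_mid hγ hc h1 h2 ht
  · intro J hJ
    obtain ⟨i, hi⟩ := hall J hJ
    have hca : IsCrossingParam γ (J.a i) := J.crossing_a i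
    obtain ⟨h1, h2⟩ := pt_mem hγ hca (by norm_num) (by norm_num) hpq
    have h3 : nxt γ (J.a i) ≤ J.b i := nxt_le (J.crossing_b i) (J.lt i)
    refine ⟨i, pt γ (1/2) (1/2) (J.a i), ⟨h1, by linarith⟩, ?_⟩
    rw [hi]
    unfold phiOne
    rw [if_pos ⟨J.a i, hca, rfl⟩]

open Classical in
/-- An admissible function taking both values `1` and `-1`. -/
def phiTwo (γ : PlanarCurve) : ℝ → ℤ := fun t =>
  if ∃ c, IsCrossingParam γ c ∧ t = pt γ (2/3) (1/3) c then 1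
  else if ∃ c, IsCrossingParam γ c ∧ t = pt γ (1/3) (2/3) c then -1 else 0

lemma phiTwo_adm (hγ : IsGeneric γ) : IsAdmissibleFun γ (phiTwo γ) := by
  have hpq1 : (2:ℝ)/3 + 1/3 = 1 := by norm_num
  have hpq2 : (1:ℝ)/3 + 2/3 = 1 := by norm_num
  refine ⟨?_, ?_, ?_, ?_, ?_⟩
  · intro t
    have hiff1 := cond_shift hγ hpq1 t
    have hiff2 := cond_shift hγ hpq2 t
    unfold phiTwo
    by_cases h1 : ∃ c, IsCrossingParam γ c ∧ t = pt γ (2/3) (1/3) c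
    · rw [if_pos h1, if_pos (hiff1.mpr h1)]
    · rw [if_neg h1, if_neg (fun hx => h1 (hiff1.mp hx))]
      by_cases h2 : ∃ c, IsCrossingParam γ c ∧ t = pt γ (1/3) (2/3) c
      · rw [if_pos h2, if_pos (hiff2.mpr h2)]
      · rw [if_neg h2, if_neg (fun hx => h2 (hiff2.mp hx))]
  · intro t
    unfold phiTwo
    split_ifs <;> tauto
  · intro t ht
    unfold phiTwo
    rw [if_neg, if_neg]
    · rintro ⟨c, hc, rfl⟩
      obtain ⟨h1, h2⟩ := pt_mem hγ hc (by norm_num) (by norm_num) hpq2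
      exact not_cp_mid hγ hc h1 h2 ht
    · rintro ⟨c, hc, rfl⟩
      obtain ⟨h1, h2⟩ := pt_mem hγ hc (by norm_num) (by norm_num) hpq1
      exact not_cp_mid hγ hc h1 h2 ht
  · refine ((cond_fin hγ (by norm_num : (0:ℝ) < 2/3) (by norm_num) hpq1).union
      (cond_fin hγ (by norm_num : (0:ℝ) < 1/3) (by norm_num) hpq2)).subset ?_
    rintro t ⟨htI, htne⟩
    by_cases h1 : ∃ c, IsCrossingParam γ c ∧ t = pt γ (2/3) (1/3) c
    · exact Or.inl ⟨h1, htI⟩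
    · by_cases h2 : ∃ c, IsCrossingParam γ c ∧ t = pt γ (1/3) (2/3) c
      · exact Or.inr ⟨h2, htI⟩
      · exact absurd (by unfold phiTwo; rw [if_neg h1, if_neg h2]) htne
  · intro J hJ
    set i : Fin J.n := ⟨0, J.npos⟩
    have hca : IsCrossingParam γ (J.a i) := J.crossing_a i
    have h3 : nxt γ (J.a i) ≤ J.b i := nxt_le (J.crossing_b i) (J.lt i)
    rcases J.eps_pm i with hi | hi
    · obtain ⟨h1, h2⟩ := pt_mem hγ hca (by norm_num) (by norm_num) hpq1
      refine ⟨i, pt γ (2/3) (1/3) (J.a i), ⟨h1, by linarith⟩, ?_⟩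
      rw [hi]
      unfold phiTwo
      rw [if_pos ⟨J.a i, hca, rfl⟩]
    · obtain ⟨h1, h2⟩ := pt_mem hγ hca (by norm_num) (by norm_num) hpq2
      refine ⟨i, pt γ (1/3) (2/3) (J.a i), ⟨h1, by linarith⟩, ?_⟩
      rw [hi]
      unfold phiTwo
      rw [if_neg, if_pos ⟨J.a i, hca, rfl⟩]
      rintro ⟨c₁, hc₁, heq⟩
      obtain ⟨g1, g2⟩ := pt_mem hγ hc₁ (by norm_num) (by norm_num) hpq1
      rw [← heq] at g1 g2
      have hcc : J.a i = c₁ := interval_disj hγ hca hc₁ h1 h2 g1 g2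
      rw [← hcc] at heq
      unfold pt at heq
      have := (nxt_spec hγ hca).2.1
      linarith

end Stmt7Aux
theorem stmt7 (γ : PlanarCurve) (hγ : IsGeneric γ) :
    0 < mu γ ↔
      (∃ J : CurvePolygon γ, J.Admissible ∧ J.Positive) ∧
      (∃ J : CurvePolygon γ, J.Admissible ∧ J.Negative) := by
  constructor
  · intro hpos
    by_contra hcon
    rw [not_and_or] at hcon
    have key : ∀ σ : ℤ, σ = 1 ∨ σ = -1 →
        (∀ J : CurvePolygon γ, J.Admissible → ∃ i, J.eps i = σ) → False := by
      intro σ hσ hall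
      obtain ⟨hadm, hmu⟩ := Stmt7Aux.phiOne_adm hγ hσ hall
      have h0 : mu γ ≤ 0 := Nat.sInf_le ⟨_, hadm, hmu⟩
      omega
    rcases hcon with h | h
    · refine key (-1) (Or.inr rfl) ?_
      intro J hJ
      by_contra hno
      push_neg at hno
      refine h ⟨J, hJ, fun i => ?_⟩
      rcases J.eps_pm i with h1 | h1
      · exact h1
      · exact absurd h1 (hno i)
    · refine key 1 (Or.inl rfl) ?_
      intro J hJ
      by_contra hno
      push_neg at hno
      refine h ⟨J, hJ, fun i => ?_⟩
      rcases J.eps_pm i with h1 | h1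
      · exact absurd h1 (hno i)
      · exact h1
  · rintro ⟨⟨Jp, hJpA, hJpP⟩, ⟨Jn, hJnA, hJnN⟩⟩
    by_contra h0
    push_neg at h0
    have h0' : mu γ = 0 := Nat.le_zero.mp h0
    have hne : {k : ℕ | ∃ Φ : ℝ → ℤ, IsAdmissibleFun γ Φ ∧ muFun Φ = k}.Nonempty :=
      ⟨muFun (Stmt7Aux.phiTwo γ), Stmt7Aux.phiTwo γ, Stmt7Aux.phiTwo_adm hγ, rfl⟩
    have hmem : (0:ℕ) ∈ {k : ℕ | ∃ Φ : ℝ → ℤ, IsAdmissibleFun γ Φ ∧ muFun Φ = k} := by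
      have h1 : mu γ ∈ {k : ℕ | ∃ Φ : ℝ → ℤ, IsAdmissibleFun γ Φ ∧ muFun Φ = k} :=
        Nat.sInf_mem hne
      rwa [h0'] at h1
    obtain ⟨Φ, ⟨hper, hval, hcr, hfin, hpoly⟩, hmu0⟩ := hmem
    obtain ⟨i, tp, htpI, htpv⟩ := hpoly Jp hJpA
    obtain ⟨j, tn, htnI, htnv⟩ := hpoly Jn hJnA
    rw [hJpP i] at htpv
    rw [hJnN j] at htnv
    have hfr : ∀ t : ℝ, Φ (Int.fract t) = Φ t := by
      intro t
      rw [Int.fract]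
      have h2 := hper.sub_int_mul_eq (x := t) ⌊t⌋
      simpa using h2
    have hup : Int.fract tp ∈ suppIn Φ :=
      ⟨⟨Int.fract_nonneg tp, Int.fract_lt_one tp⟩, by rw [hfr, htpv]; norm_num⟩
    have hun : Int.fract tn ∈ suppIn Φ :=
      ⟨⟨Int.fract_nonneg tn, Int.fract_lt_one tn⟩, by rw [hfr, htnv]; norm_num⟩
    have hfin' : (suppIn Φ).Finite := hfin
    have hsetfin : {t ∈ suppIn Φ | Φ t ≠ Φ (nextPt (suppIn Φ) t)}.Finite :=
      hfin'.subset (Set.sep_subset _ _)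
    have hemp : {t ∈ suppIn Φ | Φ t ≠ Φ (nextPt (suppIn Φ) t)} = ∅ :=
      (Set.ncard_eq_zero hsetfin).mp hmu0
    have hconst : ∀ t ∈ suppIn Φ, Φ t = Φ (nextPt (suppIn Φ) t) := by
      intro t ht
      by_contra hne'
      have hmm : t ∈ ({t ∈ suppIn Φ | Φ t ≠ Φ (nextPt (suppIn Φ) t)} : Set ℝ) := ⟨ht, hne'⟩
      rw [hemp] at hmm
      exact hmm
    have hc := Stmt7Aux.const_on hfin' Φ hconst hup hun
    rw [hfr, hfr, htpv, htnv] at hc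
    norm_num at hc

end
end

section
/- Every generic closed regular curve γ in ℝ² satisfies μ(γ) ≤ 2·#_γ, where #_γ is the number of crossings of γ. -/
open Set

noncomputable section

section Stmt10Aux

lemma gamma_int_shift (γ : PlanarCurve) (t : ℝ) (k : ℤ) :
    γ.toFun (t + k) = γ.toFun t := by
  simpa using (γ.periodic.int_mul k) t

lemma gamma_fract (γ : PlanarCurve) (t : ℝ) :
    γ.toFun (Int.fract t) = γ.toFun t := by
  have h : Int.fract t = t + ((-⌊t⌋ : ℤ) : ℝ) := by
    rw [Int.fract]; push_cast; ring
  rw [h, gamma_int_shift]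

lemma crossing_add_int {γ : PlanarCurve} {t : ℝ} (h : IsCrossingParam γ t) (k : ℤ) :
    IsCrossingParam γ (t + k) := by
  obtain ⟨s, hs, hne⟩ := h
  refine ⟨s, by rw [gamma_int_shift, hs], ?_⟩
  intro j hj
  refine hne (k + j) ?_
  rw [hj]; push_cast; ring

lemma crossing_fract {γ : PlanarCurve} {t : ℝ} (h : IsCrossingParam γ t) :
    IsCrossingParam γ (Int.fract t) := by
  have h2 := crossing_add_int h (-⌊t⌋)
  have h3 : Int.fract t = t + ((-⌊t⌋ : ℤ) : ℝ) := by
    rw [Int.fract]; push_cast; ring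
  rw [h3]; exact h2

lemma eq_fract_of_mem_Ico {x t : ℝ} (hx : x ∈ Set.Ico (0:ℝ) 1) {k : ℤ} (h : x = t + k) :
    x = Int.fract t := by
  have h1 : Int.fract x = x := Int.fract_eq_self.2 ⟨hx.1, hx.2⟩
  rw [← h1, h, Int.fract_add_intCast]

lemma fract_ne_of_not_shift {t s : ℝ} (hne : ∀ k : ℤ, s ≠ t + k) :
    Int.fract t ≠ Int.fract s := by
  intro h
  obtain ⟨z, hz⟩ := Int.fract_eq_fract.1 h
  exact hne (-z) (by push_cast; linarith)

/-- sign by parity of position in `C`. -/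
def sgnC (C : Finset ℝ) (c : ℝ) : ℤ := (-1) ^ (C.filter (fun x => x < c)).card

lemma sgnC_eq_or (C : Finset ℝ) (c : ℝ) : sgnC C c = 1 ∨ sgnC C c = -1 :=
  neg_one_pow_eq_or ℤ _

lemma sgnC_ne_zero (C : Finset ℝ) (c : ℝ) : sgnC C c ≠ 0 := by
  rcases sgnC_eq_or C c with h | h <;> rw [h] <;> decide

/-- The admissible function: support at `c + δ` (value `sgnC c`) and `c + 2δ`
(value `-sgnC c`) for each crossing parameter class `c ∈ C`. -/
def PhiF (C : Finset ℝ) (δ : ℝ) (t : ℝ) : ℤ :=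
  (if Int.fract (t - δ) ∈ C then sgnC C (Int.fract (t - δ)) else 0)
  + (if Int.fract (t - 2*δ) ∈ C then -sgnC C (Int.fract (t - 2*δ)) else 0)

lemma congr_int {u v cu cv : ℝ} (hu : Int.fract u = cu) (hv : Int.fract v = cv) :
    ∃ k : ℤ, cu = cv + (u - v) + k := by
  refine ⟨⌊v⌋ - ⌊u⌋, ?_⟩
  have h1 : u - cu = ⌊u⌋ := by rw [← hu]; exact Int.self_sub_fract u
  have h2 : v - cv = ⌊v⌋ := by rw [← hv]; exact Int.self_sub_fract v
  push_cast
  linarith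

section Main

variable {γ : PlanarCurve} {C : Finset ℝ} {δ : ℝ}

/-- separation hypothesis at shift `δ`. -/
def Sep1 (C : Finset ℝ) (δ : ℝ) : Prop :=
  ∀ c1 ∈ C, ∀ c2 ∈ C, ∀ k : ℤ, c1 ≠ c2 + δ + k

/-- separation hypothesis at shift `2δ`. -/
def Sep2 (C : Finset ℝ) (δ : ℝ) : Prop :=
  ∀ c1 ∈ C, ∀ c2 ∈ C, ∀ k : ℤ, c1 ≠ c2 + 2*δ + k

lemma PhiF_eq_sgn (hsep1 : Sep1 C δ) {c t : ℝ} (hc : c ∈ C)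
    (ht : Int.fract (t - δ) = c) : PhiF C δ t = sgnC C c := by
  unfold PhiF
  rw [ht, if_pos hc]
  have h2 : Int.fract (t - 2*δ) ∉ C := by
    intro h2
    obtain ⟨k, hk⟩ := congr_int ht (rfl : Int.fract (t - 2*δ) = Int.fract (t - 2*δ))
    refine hsep1 c hc _ h2 k ?_
    rw [hk]; ring
  rw [if_neg h2, add_zero]

lemma PhiF_eq_neg_sgn (hsep1 : Sep1 C δ) {c t : ℝ} (hc : c ∈ C)
    (ht : Int.fract (t - 2*δ) = c) : PhiF C δ t = -sgnC C c := by
  unfold PhiF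
  rw [ht, if_pos hc]
  have h2 : Int.fract (t - δ) ∉ C := by
    intro h2
    obtain ⟨k, hk⟩ := congr_int (rfl : Int.fract (t - δ) = Int.fract (t - δ)) ht
    refine hsep1 _ h2 c hc k ?_
    rw [hk]; ring
  rw [if_neg h2, zero_add]

lemma PhiF_eq_zero {t : ℝ} (h1 : Int.fract (t - δ) ∉ C) (h2 : Int.fract (t - 2*δ) ∉ C) :
    PhiF C δ t = 0 := by
  unfold PhiF; rw [if_neg h1, if_neg h2, add_zero]

lemma PhiF_periodic (C : Finset ℝ) (δ : ℝ) : Function.Periodic (PhiF C δ) 1 := by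
  intro t
  unfold PhiF
  have h1 : t + 1 - δ = (t - δ) + ((1:ℤ):ℝ) := by push_cast; ring
  have h2 : t + 1 - 2*δ = (t - 2*δ) + ((1:ℤ):ℝ) := by push_cast; ring
  rw [h1, h2, Int.fract_add_intCast, Int.fract_add_intCast]

lemma PhiF_range (hsep1 : Sep1 C δ) (t : ℝ) :
    PhiF C δ t = 0 ∨ PhiF C δ t = 1 ∨ PhiF C δ t = -1 := by
  by_cases h1 : Int.fract (t - δ) ∈ C
  · rw [PhiF_eq_sgn hsep1 h1 rfl]
    rcases sgnC_eq_or C (Int.fract (t - δ)) with h | h <;> rw [h] <;> simp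
  · by_cases h2 : Int.fract (t - 2*δ) ∈ C
    · rw [PhiF_eq_neg_sgn hsep1 h2 rfl]
      rcases sgnC_eq_or C (Int.fract (t - 2*δ)) with h | h <;> rw [h] <;> simp
    · exact Or.inl (PhiF_eq_zero h1 h2)

lemma PhiF_crossing_zero
    (hmem : ∀ x, x ∈ C ↔ x ∈ Set.Ico (0:ℝ) 1 ∧ IsCrossingParam γ x)
    (hsep1 : Sep1 C δ) (hsep2 : Sep2 C δ) {t : ℝ} (ht : IsCrossingParam γ t) :
    PhiF C δ t = 0 := by
  have htC : Int.fract t ∈ C :=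
    (hmem _).2 ⟨⟨Int.fract_nonneg t, Int.fract_lt_one t⟩, crossing_fract ht⟩
  refine PhiF_eq_zero ?_ ?_
  · intro h1
    obtain ⟨k, hk⟩ := congr_int (rfl : Int.fract t = Int.fract t)
      (rfl : Int.fract (t - δ) = Int.fract (t - δ))
    refine hsep1 _ htC _ h1 k ?_
    rw [hk]; ring
  · intro h2
    obtain ⟨k, hk⟩ := congr_int (rfl : Int.fract t = Int.fract t)
      (rfl : Int.fract (t - 2*δ) = Int.fract (t - 2*δ))
    refine hsep2 _ htC _ h2 k ?_
    rw [hk]; ring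

lemma supp_eq (hC01 : ∀ c ∈ C, (0:ℝ) ≤ c ∧ c < 1) (hδ : 0 < δ)
    (hnowrap : ∀ c ∈ C, c + 2*δ < 1) (hsep1 : Sep1 C δ) :
    suppIn (PhiF C δ)
      = ((fun c => c + δ) '' ↑C) ∪ ((fun c => c + 2*δ) '' ↑C) := by
  ext t
  constructor
  · rintro ⟨htI, htne⟩
    by_cases h1 : Int.fract (t - δ) ∈ C
    · left
      refine ⟨Int.fract (t - δ), h1, ?_⟩
      set c := Int.fract (t - δ) with hc
      have hk : (t - δ) - c = ⌊t - δ⌋ := Int.self_sub_fract (t - δ)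
      have hb := hC01 c h1
      have hb2 := hnowrap c h1
      have hlb : (-1 : ℝ) < ⌊t - δ⌋ := by
        rw [← hk]; simp only [Set.mem_Ico] at htI; cases htI; linarith
      have hub : (⌊t - δ⌋ : ℝ) < 1 := by
        rw [← hk]; simp only [Set.mem_Ico] at htI; cases htI; linarith
      have : ⌊t - δ⌋ = 0 := by
        have e1 : (-1 : ℤ) < ⌊t - δ⌋ := by exact_mod_cast hlb
        have e2 : ⌊t - δ⌋ < 1 := by exact_mod_cast hub
        omega
      rw [this] at hk; push_cast at hk
      show c + δ = t
      linarith
    · by_cases h2 : Int.fract (t - 2*δ) ∈ C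
      · right
        refine ⟨Int.fract (t - 2*δ), h2, ?_⟩
        set c := Int.fract (t - 2*δ) with hc
        have hk : (t - 2*δ) - c = ⌊t - 2*δ⌋ := Int.self_sub_fract (t - 2*δ)
        have hb := hC01 c h2
        have hb2 := hnowrap c h2
        have hlb : (-1 : ℝ) < ⌊t - 2*δ⌋ := by
          rw [← hk]; simp only [Set.mem_Ico] at htI; cases htI; linarith
        have hub : (⌊t - 2*δ⌋ : ℝ) < 1 := by
          rw [← hk]; simp only [Set.mem_Ico] at htI; cases htI; linarith
        have : ⌊t - 2*δ⌋ = 0 := by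
          have e1 : (-1 : ℤ) < ⌊t - 2*δ⌋ := by exact_mod_cast hlb
          have e2 : ⌊t - 2*δ⌋ < 1 := by exact_mod_cast hub
          omega
        rw [this] at hk; push_cast at hk
        show c + 2*δ = t
        linarith
      · exact absurd (PhiF_eq_zero h1 h2) htne
  · rintro (⟨c, hc, rfl⟩ | ⟨c, hc, rfl⟩)
    · show c + δ ∈ suppIn (PhiF C δ)
      have hb := hC01 c hc
      have hb2 := hnowrap c hc
      have hfr : Int.fract (c + δ - δ) = c := by
        rw [add_sub_cancel_right]; exact Int.fract_eq_self.2 ⟨hb.1, hb.2⟩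
      refine ⟨⟨by linarith, by linarith⟩, ?_⟩
      rw [PhiF_eq_sgn hsep1 hc hfr]
      exact sgnC_ne_zero C c
    · show c + 2*δ ∈ suppIn (PhiF C δ)
      have hb := hC01 c hc
      have hb2 := hnowrap c hc
      have hfr : Int.fract (c + 2*δ - 2*δ) = c := by
        rw [add_sub_cancel_right]; exact Int.fract_eq_self.2 ⟨hb.1, hb.2⟩
      refine ⟨⟨by linarith, by linarith⟩, ?_⟩
      rw [PhiF_eq_neg_sgn hsep1 hc hfr]
      simpa using sgnC_ne_zero C c

lemma sgnC_min (hne : C.Nonempty) : sgnC C (C.min' hne) = 1 := by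
  unfold sgnC
  have h : C.filter (fun x => x < C.min' hne) = ∅ := by
    refine Finset.filter_eq_empty_iff.2 ?_
    intro x hx
    exact not_lt.2 (C.min'_le x hx)
  rw [h]; simp

lemma sgnC_max (hne : C.Nonempty) (heven : Even C.card) :
    sgnC C (C.max' hne) = -1 := by
  unfold sgnC
  have h : C.filter (fun x => x < C.max' hne) = C.erase (C.max' hne) := by
    ext x
    simp only [Finset.mem_filter, Finset.mem_erase]
    constructor
    · rintro ⟨hx, hlt⟩; exact ⟨ne_of_lt hlt, hx⟩
    · rintro ⟨hne', hx⟩; exact ⟨hx, lt_of_le_of_ne (C.le_max' x hx) hne'⟩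
  rw [h, Finset.card_erase_of_mem (C.max'_mem hne)]
  have hpos : 1 ≤ C.card := Finset.card_pos.2 hne
  have hodd : Odd (C.card - 1) := Nat.Even.sub_odd hpos heven odd_one
  exact hodd.neg_one_pow

lemma sgnC_succ {c : ℝ} (hc : c ∈ C)
    (hlt : (C.filter (fun x => c < x)).Nonempty) :
    sgnC C ((C.filter (fun x => c < x)).min' hlt) = - sgnC C c := by
  set c' := (C.filter (fun x => c < x)).min' hlt with hc'
  have hc'mem := Finset.min'_mem _ hlt
  rw [Finset.mem_filter] at hc'mem
  have key : C.filter (fun x => x < c') = insert c (C.filter (fun x => x < c)) := by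
    ext x
    simp only [Finset.mem_filter, Finset.mem_insert]
    constructor
    · rintro ⟨hx, hxc'⟩
      by_cases hxc : x = c
      · exact Or.inl hxc
      · refine Or.inr ⟨hx, ?_⟩
        rcases lt_or_ge c x with h | h
        · exact absurd (Finset.min'_le _ x (Finset.mem_filter.2 ⟨hx, h⟩)) (not_le.2 hxc')
        · exact lt_of_le_of_ne h hxc
    · rintro (rfl | ⟨hx, hxc⟩)
      · exact ⟨hc, hc'mem.2⟩
      · exact ⟨hx, lt_trans hxc hc'mem.2⟩
  unfold sgnC
  rw [key, Finset.card_insert_of_notMem (by simp), pow_succ]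
  ring

lemma nextPt_eq_of_isLeast {S : Set ℝ} {x y : ℝ} (hy : IsLeast {z ∈ S | x < z} y) :
    nextPt S x = y := by
  unfold nextPt
  rw [if_pos ⟨y, hy.1.1, hy.1.2⟩]
  exact hy.csInf_eq

lemma nextPt_eq_of_none {S : Set ℝ} {x y : ℝ} (h : ∀ z ∈ S, ¬ x < z)
    (hy : IsLeast S y) : nextPt S x = y := by
  unfold nextPt
  rw [if_neg (by push_neg; exact fun z hz => not_lt.1 (h z hz))]
  exact hy.csInf_eq

end Main

end Stmt10Aux

section Stmt10Aux2

variable {γ : PlanarCurve} {C : Finset ℝ} {δ : ℝ}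

lemma change_subset (hC01 : ∀ c ∈ C, (0:ℝ) ≤ c ∧ c < 1) (hδ : 0 < δ)
    (hnowrap : ∀ c ∈ C, c + 2*δ < 1) (hsep1 : Sep1 C δ)
    (hgapC : ∀ c1 ∈ C, ∀ c2 ∈ C, c1 < c2 → 4*δ ≤ c2 - c1)
    (heven : Even C.card) :
    {t ∈ suppIn (PhiF C δ) | PhiF C δ t ≠ PhiF C δ (nextPt (suppIn (PhiF C δ)) t)}
      ⊆ (fun c => c + δ) '' ↑C := by
  have hS := supp_eq hC01 hδ hnowrap hsep1
  intro t ht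
  obtain ⟨hts, htne⟩ := ht
  rw [hS] at hts
  rcases hts with h | h
  · exact h
  exfalso
  obtain ⟨c, hc, rfl⟩ := h
  have hcb := hC01 c hc
  have hfr2 : Int.fract (c + 2*δ - 2*δ) = c := by
    rw [add_sub_cancel_right]; exact Int.fract_eq_self.2 ⟨hcb.1, hcb.2⟩
  have hval : PhiF C δ (c + 2*δ) = -sgnC C c := PhiF_eq_neg_sgn hsep1 hc hfr2
  have htne' : PhiF C δ (c + 2*δ)
      ≠ PhiF C δ (nextPt (suppIn (PhiF C δ)) (c + 2*δ)) := htne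
  by_cases hex : (C.filter (fun x => c < x)).Nonempty
  · set c' := (C.filter (fun x => c < x)).min' hex with hc'def
    have hc'mem := Finset.min'_mem _ hex
    rw [Finset.mem_filter] at hc'mem
    obtain ⟨hc'C, hcc'⟩ := hc'mem
    have hgap := hgapC c hc c' hc'C hcc'
    have hnext : nextPt (suppIn (PhiF C δ)) (c + 2*δ) = c' + δ := by
      rw [hS]
      apply nextPt_eq_of_isLeast
      constructor
      · exact ⟨Or.inl ⟨c', hc'C, rfl⟩, by linarith⟩
      · rintro z ⟨hz, hltz⟩
        rcases hz with ⟨e, he, rfl⟩ | ⟨e, he, rfl⟩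
        · show c' + δ ≤ e + δ
          have hlt2 : c + 2*δ < e + δ := hltz
          have hce : c < e := by linarith
          have := Finset.min'_le _ e (Finset.mem_filter.2 ⟨he, hce⟩)
          linarith
        · show c' + δ ≤ e + 2*δ
          have hlt2 : c + 2*δ < e + 2*δ := hltz
          have hce : c < e := by linarith
          have := Finset.min'_le _ e (Finset.mem_filter.2 ⟨he, hce⟩)
          linarith
    have hc'b := hC01 c' hc'C
    have hfr1 : Int.fract (c' + δ - δ) = c' := by
      rw [add_sub_cancel_right]; exact Int.fract_eq_self.2 ⟨hc'b.1, hc'b.2⟩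
    have hval' : PhiF C δ (c' + δ) = sgnC C c' := PhiF_eq_sgn hsep1 hc'C hfr1
    have hsucc : sgnC C c' = - sgnC C c := sgnC_succ hc hex
    exact htne' (by rw [hval, hnext, hval', hsucc])
  · have hCne : C.Nonempty := ⟨c, hc⟩
    have hmax : ∀ e ∈ C, e ≤ c := by
      intro e he
      by_contra hgt
      exact hex ⟨e, Finset.mem_filter.2 ⟨he, not_le.1 hgt⟩⟩
    have hminb := hC01 (C.min' hCne) (C.min'_mem hCne)
    have hnext : nextPt (suppIn (PhiF C δ)) (c + 2*δ) = C.min' hCne + δ := by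
      rw [hS]
      apply nextPt_eq_of_none
      · rintro z (⟨e, he, rfl⟩ | ⟨e, he, rfl⟩)
        · show ¬ c + 2*δ < e + δ
          exact not_lt.2 (by linarith [hmax e he])
        · show ¬ c + 2*δ < e + 2*δ
          exact not_lt.2 (by linarith [hmax e he])
      · constructor
        · exact Or.inl ⟨C.min' hCne, C.min'_mem hCne, rfl⟩
        · rintro z (⟨e, he, rfl⟩ | ⟨e, he, rfl⟩)
          · show C.min' hCne + δ ≤ e + δ
            linarith [C.min'_le e he]
          · show C.min' hCne + δ ≤ e + 2*δ
            linarith [C.min'_le e he]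
    have hcmax : c = C.max' hCne :=
      le_antisymm (C.le_max' c hc) (hmax _ (C.max'_mem hCne))
    have hvmin : PhiF C δ (C.min' hCne + δ) = sgnC C (C.min' hCne) :=
      PhiF_eq_sgn hsep1 (C.min'_mem hCne)
        (by rw [add_sub_cancel_right]; exact Int.fract_eq_self.2 ⟨hminb.1, hminb.2⟩)
    refine htne' ?_
    rw [hval, hnext, hvmin, sgnC_min hCne, hcmax, sgnC_max hCne heven]
    decide

lemma polygon_hit
    (hmem : ∀ x, x ∈ C ↔ x ∈ Set.Ico (0:ℝ) 1 ∧ IsCrossingParam γ x)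
    (hsep1 : Sep1 C δ) (hδ : 0 < δ)
    (hgapP : ∀ a b : ℝ, IsCrossingParam γ a → IsCrossingParam γ b → a < b → 2*δ < b - a)
    (J : CurvePolygon γ) :
    ∃ i : Fin J.n, ∃ t ∈ Set.Ioo (J.a i) (J.b i), PhiF C δ t = J.eps i := by
  refine ⟨⟨0, J.npos⟩, ?_⟩
  set i : Fin J.n := ⟨0, J.npos⟩
  have ha := J.crossing_a i
  have hb := J.crossing_b i
  have hab := J.lt i
  have hgap := hgapP _ _ ha hb hab
  have haC : Int.fract (J.a i) ∈ C :=
    (hmem _).2 ⟨⟨Int.fract_nonneg _, Int.fract_lt_one _⟩, crossing_fract ha⟩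
  have hf1 : Int.fract (J.a i + δ - δ) = Int.fract (J.a i) := by rw [add_sub_cancel_right]
  have hf2 : Int.fract (J.a i + 2*δ - 2*δ) = Int.fract (J.a i) := by rw [add_sub_cancel_right]
  have h1 : PhiF C δ (J.a i + δ) = sgnC C (Int.fract (J.a i)) := PhiF_eq_sgn hsep1 haC hf1
  have h2 : PhiF C δ (J.a i + 2*δ) = -sgnC C (Int.fract (J.a i)) :=
    PhiF_eq_neg_sgn hsep1 haC hf2
  rcases J.eps_pm i with he | he <;> rcases sgnC_eq_or C (Int.fract (J.a i)) with hs | hs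
  · exact ⟨J.a i + δ, ⟨by linarith, by linarith⟩, by rw [h1, hs, he]⟩
  · exact ⟨J.a i + 2*δ, ⟨by linarith, by linarith⟩, by rw [h2, hs, he]; decide⟩
  · exact ⟨J.a i + 2*δ, ⟨by linarith, by linarith⟩, by rw [h2, hs, he]⟩
  · exact ⟨J.a i + δ, ⟨by linarith, by linarith⟩, by rw [h1, hs, he]⟩

lemma fiber_pair (hγ : IsGeneric γ)
    (hmem : ∀ x, x ∈ C ↔ x ∈ Set.Ico (0:ℝ) 1 ∧ IsCrossingParam γ x)
    {p : ℝ × ℝ} (hp : p ∈ crossingSet γ) :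
    (C.filter (fun x => γ.toFun x = p)).card = 2 := by
  classical
  obtain ⟨t₀, hpt, hcp⟩ := hp
  obtain ⟨s₀, hs0, hne0⟩ := hcp
  have hscp : IsCrossingParam γ s₀ :=
    ⟨t₀, hs0.symm, fun k hk => hne0 (-k) (by rw [hk]; push_cast; ring)⟩
  have hall := (hγ.2.1 t₀ s₀ hs0 hne0).2
  have hkey : C.filter (fun x => γ.toFun x = p) = {Int.fract t₀, Int.fract s₀} := by
    ext x
    simp only [Finset.mem_filter, Finset.mem_insert, Finset.mem_singleton]
    constructor
    · rintro ⟨hxC, hγx⟩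
      obtain ⟨hxI, _⟩ := (hmem x).1 hxC
      rcases hall x (by rw [hγx, ← hpt]) with ⟨k, hk⟩ | ⟨k, hk⟩
      · exact Or.inl (eq_fract_of_mem_Ico hxI hk)
      · exact Or.inr (eq_fract_of_mem_Ico hxI hk)
    · rintro (rfl | rfl)
      · exact ⟨(hmem _).2 ⟨⟨Int.fract_nonneg _, Int.fract_lt_one _⟩, crossing_fract
          ⟨s₀, hs0, hne0⟩⟩, by rw [gamma_fract, hpt]⟩
      · exact ⟨(hmem _).2 ⟨⟨Int.fract_nonneg _, Int.fract_lt_one _⟩, crossing_fract hscp⟩,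
          by rw [gamma_fract, hs0, hpt]⟩
  rw [hkey, Finset.card_insert_of_notMem (by simpa using fract_ne_of_not_shift hne0),
    Finset.card_singleton]

lemma card_C_eq (hγ : IsGeneric γ)
    (hmem : ∀ x, x ∈ C ↔ x ∈ Set.Ico (0:ℝ) 1 ∧ IsCrossingParam γ x) :
    C.card = 2 * crossingCount γ := by
  classical
  have hfin := hγ.1
  have hmap : ∀ x ∈ C, γ.toFun x ∈ hfin.toFinset := by
    intro x hx
    rw [Set.Finite.mem_toFinset]
    obtain ⟨_, hcp⟩ := (hmem x).1 hx
    exact ⟨x, rfl, hcp⟩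
  rw [Finset.card_eq_sum_card_fiberwise hmap]
  rw [Finset.sum_congr rfl (fun p hp => fiber_pair hγ hmem (hfin.mem_toFinset.1 hp)),
    Finset.sum_const, smul_eq_mul]
  rw [crossingCount, Set.ncard_eq_toFinset_card _ hfin]
  ring

lemma P_finite (hγ : IsGeneric γ) :
    {t ∈ Set.Ico (0:ℝ) 1 | IsCrossingParam γ t}.Finite := by
  have h : {t ∈ Set.Ico (0:ℝ) 1 | IsCrossingParam γ t}
      ⊆ ⋃ p ∈ crossingSet γ, {t ∈ Set.Ico (0:ℝ) 1 | γ.toFun t = p} := by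
    rintro t ⟨htI, htc⟩
    exact Set.mem_biUnion ⟨t, rfl, htc⟩ ⟨htI, rfl⟩
  refine Set.Finite.subset (Set.Finite.biUnion hγ.1 ?_) h
  intro p hp
  obtain ⟨t₀, hpt, hcp⟩ := hp
  obtain ⟨s₀, hs0, hne0⟩ := hcp
  have hall := (hγ.2.1 t₀ s₀ hs0 hne0).2
  refine Set.Finite.subset ((Set.finite_singleton (Int.fract s₀)).insert (Int.fract t₀)) ?_
  rintro x ⟨hxI, hγx⟩
  simp only [Set.mem_insert_iff, Set.mem_singleton_iff]
  rcases hall x (by rw [hγx, ← hpt]) with ⟨k, hk⟩ | ⟨k, hk⟩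
  · exact Or.inl (eq_fract_of_mem_Ico hxI hk)
  · exact Or.inr (eq_fract_of_mem_Ico hxI hk)

end Stmt10Aux2

theorem stmt10 (γ : PlanarCurve) (hγ : IsGeneric γ) :
    mu γ ≤ 2 * crossingCount γ := by
  classical
  have hPfin := P_finite hγ
  set C : Finset ℝ := hPfin.toFinset with hCdef
  have hmem : ∀ x, x ∈ C ↔ x ∈ Set.Ico (0:ℝ) 1 ∧ IsCrossingParam γ x := by
    intro x
    rw [hCdef, Set.Finite.mem_toFinset]
    exact Iff.rfl
  have hcard : C.card = 2 * crossingCount γ := card_C_eq hγ hmem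
  by_cases hne : C.Nonempty
  swap
  · rw [Finset.not_nonempty_iff_eq_empty] at hne
    have hnoc : ∀ t : ℝ, ¬ IsCrossingParam γ t := by
      intro t ht
      have hmem2 : Int.fract t ∈ C :=
        (hmem _).2 ⟨⟨Int.fract_nonneg _, Int.fract_lt_one _⟩, crossing_fract ht⟩
      rw [hne] at hmem2
      exact absurd hmem2 (Finset.notMem_empty _)
    have hadm : IsAdmissibleFun γ (fun _ => 0) := by
      refine ⟨fun t => rfl, fun t => Or.inl rfl, fun t _ => rfl, by simp, ?_⟩
      intro J _
      exact absurd (J.crossing_a ⟨0, J.npos⟩) (hnoc _)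
    have hle : mu γ ≤ muFun (fun _ => 0) := Nat.sInf_le ⟨_, hadm, rfl⟩
    have hz : muFun (fun (_ : ℝ) => (0:ℤ)) = 0 := by
      unfold muFun suppIn
      simp
    omega
  · have hc1 : 1 ≤ C.card := Finset.card_pos.2 hne
    have hc2 : 2 ≤ C.card := by omega
    have hC01 : ∀ c ∈ C, (0:ℝ) ≤ c ∧ c < 1 := by
      intro c hc
      exact Set.mem_Ico.1 ((hmem c).1 hc).1
    obtain ⟨x0, hx0, y0, hy0, hxy0⟩ := Finset.one_lt_card.1 hc2
    have hOD : (C.offDiag).Nonempty := ⟨(x0, y0), Finset.mem_offDiag.2 ⟨hx0, hy0, hxy0⟩⟩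
    set G : Finset ℝ := C.offDiag.image (fun q => min |q.1 - q.2| (1 - |q.1 - q.2|))
      with hGdef
    have hGne : G.Nonempty := hOD.image _
    set g : ℝ := G.min' hGne with hgdef
    have hgpos : 0 < g := by
      rw [hgdef]
      refine (Finset.lt_min'_iff G hGne).2 ?_
      intro y hy
      rw [hGdef] at hy
      obtain ⟨⟨u, v⟩, huv, rfl⟩ := Finset.mem_image.1 hy
      obtain ⟨hu, hv, huvne⟩ := Finset.mem_offDiag.1 huv
      have h1 := hC01 u hu
      have h2 := hC01 v hv
      have habs : |u - v| < 1 := by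
        rw [abs_sub_lt_iff]
        constructor <;> linarith [h1.1, h1.2, h2.1, h2.2]
      have hpos : 0 < |u - v| := abs_pos.2 (sub_ne_zero.2 huvne)
      exact lt_min hpos (by linarith)
    have hgle : ∀ u ∈ C, ∀ v ∈ C, u ≠ v → g ≤ min |u - v| (1 - |u - v|) := by
      intro u hu v hv huv
      refine Finset.min'_le _ _ ?_
      rw [hGdef]
      exact Finset.mem_image.2 ⟨(u,v), Finset.mem_offDiag.2 ⟨hu, hv, huv⟩, rfl⟩
    have hghalf : g ≤ 1/2 := by
      have hle2 := hgle x0 hx0 y0 hy0 hxy0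
      rcases le_or_gt (|x0 - y0|) (1/2) with h | h
      · exact hle2.trans ((min_le_left _ _).trans h)
      · exact hle2.trans ((min_le_right _ _).trans (by linarith))
    set M : ℝ := C.max' hne with hMdef
    have hM1 : M < 1 := (hC01 M (C.max'_mem hne)).2
    set δ : ℝ := min (g/4) ((1 - M)/3) with hδdef
    have hδpos : 0 < δ := lt_min (by linarith) (by linarith)
    have hδg : δ ≤ g/4 := min_le_left _ _
    have hδM : δ ≤ (1 - M)/3 := min_le_right _ _
    have hδ8 : δ ≤ 1/8 := by linarith
    have hnowrap : ∀ c ∈ C, c + 2*δ < 1 := by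
      intro c hc
      have hcM := C.le_max' c hc
      have : c ≤ M := hcM
      linarith
    have hgapC : ∀ c1 ∈ C, ∀ c2 ∈ C, c1 < c2 → 4*δ ≤ c2 - c1 := by
      intro c1 h1 c2 h2 hlt
      have hle3 := hgle c2 h2 c1 h1 (ne_of_gt hlt)
      have habs : |c2 - c1| = c2 - c1 := abs_of_pos (by linarith)
      have h4 : g ≤ c2 - c1 := by
        calc g ≤ min |c2 - c1| (1 - |c2 - c1|) := hle3
          _ ≤ |c2 - c1| := min_le_left _ _
          _ = c2 - c1 := habs
      linarith
    have hsep1 : Sep1 C δ := by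
      intro c1 h1 c2 h2 k hk
      have hb1 := hC01 c1 h1
      have hb2 := hC01 c2 h2
      have hkr : (k:ℝ) = c1 - c2 - δ := by linarith [hk]
      have hkl : (-2:ℝ) < (k:ℝ) := by rw [hkr]; linarith
      have hku : (k:ℝ) < 1 := by rw [hkr]; linarith
      have hk2 : (-2:ℤ) < k := by exact_mod_cast hkl
      have hk3 : k < 1 := by exact_mod_cast hku
      interval_cases k
      · have hw := hnowrap c2 h2
        push_cast at hk
        linarith
      · push_cast at hk
        have hlt : c2 < c1 := by linarith
        have := hgapC c2 h2 c1 h1 hlt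
        linarith
    have hsep2 : Sep2 C δ := by
      intro c1 h1 c2 h2 k hk
      have hb1 := hC01 c1 h1
      have hb2 := hC01 c2 h2
      have hkr : (k:ℝ) = c1 - c2 - 2*δ := by linarith [hk]
      have hkl : (-2:ℝ) < (k:ℝ) := by rw [hkr]; linarith
      have hku : (k:ℝ) < 1 := by rw [hkr]; linarith
      have hk2 : (-2:ℤ) < k := by exact_mod_cast hkl
      have hk3 : k < 1 := by exact_mod_cast hku
      interval_cases k
      · have hw := hnowrap c2 h2
        push_cast at hk
        linarith
      · push_cast at hk
        have hlt : c2 < c1 := by linarith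
        have := hgapC c2 h2 c1 h1 hlt
        linarith
    have hgapP : ∀ a b : ℝ, IsCrossingParam γ a → IsCrossingParam γ b → a < b →
        2*δ < b - a := by
      intro a b hca hcb hab
      rcases le_or_gt 1 (b - a) with h | h
      · linarith
      · have haC : Int.fract a ∈ C :=
          (hmem _).2 ⟨⟨Int.fract_nonneg _, Int.fract_lt_one _⟩, crossing_fract hca⟩
        have hbC : Int.fract b ∈ C :=
          (hmem _).2 ⟨⟨Int.fract_nonneg _, Int.fract_lt_one _⟩, crossing_fract hcb⟩
        have h1 : a - Int.fract a = ⌊a⌋ := Int.self_sub_fract a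
        have h2 : b - Int.fract b = ⌊b⌋ := Int.self_sub_fract b
        have hu01 := hC01 _ haC
        have hv01 := hC01 _ hbC
        have hk : b - a = Int.fract b - Int.fract a + ((⌊b⌋ - ⌊a⌋ : ℤ) : ℝ) := by
          push_cast
          linarith
        have hkl : (-1:ℝ) < ((⌊b⌋ - ⌊a⌋ : ℤ) : ℝ) := by
          push_cast
          push_cast at hk
          linarith
        have hku : ((⌊b⌋ - ⌊a⌋ : ℤ) : ℝ) < 2 := by
          push_cast
          push_cast at hk
          linarith
        have hk01 : (⌊b⌋ - ⌊a⌋ : ℤ) = 0 ∨ (⌊b⌋ - ⌊a⌋ : ℤ) = 1 := by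
          have a1 : (-1:ℤ) < ⌊b⌋ - ⌊a⌋ := by exact_mod_cast hkl
          have a2 : (⌊b⌋ - ⌊a⌋ : ℤ) < 2 := by exact_mod_cast hku
          omega
        rcases hk01 with he0 | he1
        · rw [he0] at hk
          push_cast at hk
          have huv : Int.fract a < Int.fract b := by linarith
          have := hgapC _ haC _ hbC huv
          linarith
        · rw [he1] at hk
          push_cast at hk
          have hw := hnowrap _ haC
          linarith
    have heven : Even C.card := by rw [hcard]; exact even_two_mul _
    have hsupp := supp_eq (C := C) (δ := δ) hC01 hδpos hnowrap hsep1
    have hadm : IsAdmissibleFun γ (PhiF C δ) := by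
      refine ⟨PhiF_periodic C δ, PhiF_range hsep1,
        fun t ht => PhiF_crossing_zero hmem hsep1 hsep2 ht, ?_, ?_⟩
      · have heq : {t | t ∈ Set.Ico (0:ℝ) 1 ∧ PhiF C δ t ≠ 0} = suppIn (PhiF C δ) := rfl
        rw [heq, hsupp]
        exact (C.finite_toSet.image _).union (C.finite_toSet.image _)
      · intro J _
        exact polygon_hit hmem hsep1 hδpos hgapP J
    have hle : mu γ ≤ muFun (PhiF C δ) := Nat.sInf_le ⟨_, hadm, rfl⟩
    have hsub := change_subset hC01 hδpos hnowrap hsep1 hgapC heven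
    have hbound : muFun (PhiF C δ) ≤ 2 * crossingCount γ := by
      unfold muFun
      calc {t ∈ suppIn (PhiF C δ) |
            PhiF C δ t ≠ PhiF C δ (nextPt (suppIn (PhiF C δ)) t)}.ncard
          ≤ ((fun c => c + δ) '' (C : Set ℝ)).ncard :=
            Set.ncard_le_ncard hsub (C.finite_toSet.image _)
        _ ≤ (C : Set ℝ).ncard := Set.ncard_image_le C.finite_toSet
        _ = C.card := Set.ncard_coe_finset C
        _ = 2 * crossingCount γ := hcard
    omega

end
end
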